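/- Let {P_{j,m}(ε,t,A)} be a secular-coefficient family, and assume m_1 = ⋯ = m_n = 0 and that each V_j is autonomous, i.e. V_j ∈ ℂ[ε, y_1,…,y_n]. Then P_{j,m} = 0 for every m ≠ 0 and every j, and the resonant coefficients satisfy ∂_t P_{j,0}(ε,t,A) = ε V_j(ε, P_{1,0}(ε,t,A), …, P_{n,0}(ε,t,A)) in ℂ[t,A][[ε]]; i.e. the renormalized amplitudes 𝒜_j = P_{j,0} themselves satisfy the original autonomous system d𝒜_j/dt = ε V_j(ε, 𝒜). -/

import Mathlib

noncomputable section

open Polynomial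

/-- Finite `R`-linear combinations of Fourier modes `e^{i m t}` (`m : ℤ`):
the mode-`m` coefficient of `x` is `x m : R`. -/
abbrev ModeRing (R : Type) [CommRing R] : Type := AddMonoidAlgebra R ℤ

/-- Formal power series in `ε` whose coefficients are finite Fourier sums with
coefficients in `R`. -/
abbrev EpsSeries (R : Type) [CommRing R] : Type := PowerSeries (ModeRing R)

/-- The mode `e^{i t}`, as a unit of `EpsSeries R` (inverse `e^{-i t}`). -/
def zUnit (R : Type) [CommRing R] : (EpsSeries R)ˣ where
  val := PowerSeries.C (AddMonoidAlgebra.single 1 1)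
  inv := PowerSeries.C (AddMonoidAlgebra.single (-1) 1)
  val_inv := by
    rw [← map_mul, AddMonoidAlgebra.single_mul_single]
    norm_num [AddMonoidAlgebra.one_def]
  inv_val := by
    rw [← map_mul, AddMonoidAlgebra.single_mul_single]
    norm_num [AddMonoidAlgebra.one_def]

/-- Evaluation of a Laurent polynomial in `z` (an element of `ℂ[z,z⁻¹] = AddMonoidAlgebra ℂ ℤ`)
at `z = e^{i t}`, landing in `EpsSeries R`. -/
def zEval (R : Type) [CommRing R] [Algebra ℂ R] : AddMonoidAlgebra ℂ ℤ →+* EpsSeries R :=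
  AddMonoidAlgebra.liftNCRingHom
    (PowerSeries.C.comp (AddMonoidAlgebra.singleZeroRingHom.comp (algebraMap ℂ R)))
    ((Units.coeHom _).comp (zpowersHom _ (zUnit R)))
    (fun _ _ => Commute.all _ _)

/-- Evaluation of `V ∈ ℂ[ε, z, z⁻¹, y₁, …, yₙ]` (encoded as a polynomial in the `y`-variables
with coefficients in `ℂ[z,z⁻¹][ε]`) at `z = e^{i t}`, `ε = ε` (the power series variable)
and given formal series values of the `y`-variables. -/
def VEval {n : ℕ} (R : Type) [CommRing R] [Algebra ℂ R]
    (V : MvPolynomial (Fin n) (Polynomial (AddMonoidAlgebra ℂ ℤ)))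
    (y : Fin n → EpsSeries R) : EpsSeries R :=
  MvPolynomial.eval₂ (Polynomial.eval₂RingHom (zEval R) PowerSeries.X) y V

/-- The polynomial ring `ℂ[t, A₁, …, Aₙ]`: the variable `none` is `t`, `some i` is `Aᵢ`. -/
abbrev AmpRing (n : ℕ) : Type := MvPolynomial (Option (Fin n)) ℂ

/-- The secular coefficient `P_{j,m}(ε,t,A) ∈ ℂ[t,A][[ε]]` of a family
`Q j = Σ_k ε^k Σ_m P_{j,m}^{(k)} e^{imt}`. -/
def Pc {n : ℕ} (Q : Fin n → EpsSeries (AmpRing n)) (j : Fin n) (m : ℤ) :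
    PowerSeries (AmpRing n) :=
  PowerSeries.mk fun k => (PowerSeries.coeff (R := ModeRing (AmpRing n)) k (Q j)).coeff m

/-- A secular-coefficient family for the system `dy_j/dt = i m_j y_j + ε V_j(ε,e^{±it},y)`:
(a) at each `ε`-order only finitely many modes are nonzero (built into `ModeRing`);
(b) the `ε⁰`-coefficient of `P_{j,m}` is `A_j δ_{m,m_j}`;
(c) for `k ≥ 1` the `ε^k`-coefficient of the resonant `P_{j,m_j}` vanishes at `t = 0`;
(d) the differential equation holds order by order in `ε` and mode by mode in `e^{imt}`:
`∂_t P_{j,m} + i(m-m_j) P_{j,m} = [ε V_j(ε, e^{±it}, Σ_l P_{·,l} e^{ilt})]_{e^{imt}}`. -/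
structure IsSecularFamily {n : ℕ} (mvec : Fin n → ℤ)
    (V : Fin n → MvPolynomial (Fin n) (Polynomial (AddMonoidAlgebra ℂ ℤ)))
    (Q : Fin n → EpsSeries (AmpRing n)) : Prop where
  coeff_zero : ∀ j, PowerSeries.coeff (R := ModeRing (AmpRing n)) 0 (Q j)
      = AddMonoidAlgebra.single (mvec j) (MvPolynomial.X (some j))
  resonant_vanish : ∀ (j : Fin n) (k : ℕ), 1 ≤ k →
    MvPolynomial.aeval
      (fun v : Option (Fin n) => Option.elim v (0 : AmpRing n) (fun i => MvPolynomial.X (some i)))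
      ((PowerSeries.coeff (R := ModeRing (AmpRing n)) k (Q j)).coeff (mvec j)) = 0
  ode : ∀ (j : Fin n) (m : ℤ),
    (PowerSeries.mk fun k =>
        MvPolynomial.pderiv none ((PowerSeries.coeff (R := ModeRing (AmpRing n)) k (Q j)).coeff m))
      + PowerSeries.C (MvPolynomial.C (Complex.I * ((m : ℂ) - (mvec j : ℂ)))) * Pc Q j m
      = PowerSeries.mk fun k =>
          (PowerSeries.coeff (R := ModeRing (AmpRing n)) k
            (PowerSeries.X * VEval (AmpRing n) (V j) Q)).coeff m

/-- The polynomial ring `ℂ[t, s, A₁, …, Aₙ]`: `none` is `t`, `some none` is `s`,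
`some (some i)` is `Aᵢ`. -/
abbrev AmpRing2 (n : ℕ) : Type := MvPolynomial (Option (Option (Fin n))) ℂ

/-- The inclusion `ℂ[t,A] → ℂ[t,s,A]`. -/
def embedTA {n : ℕ} : AmpRing n →+* AmpRing2 n :=
  (MvPolynomial.rename (Option.map (some : Fin n → Option (Fin n)))).toRingHom

/-- The map `ℂ[t,A] → ℂ[t,s,A]` renaming `t` to `s`. -/
def renameTS {n : ℕ} : AmpRing n →+* AmpRing2 n :=
  (MvPolynomial.rename
    (fun v : Option (Fin n) => Option.elim v (some none) (fun i => some (some i)))).toRingHom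

/-- Substitution of power series (with nontrivial `ε⁰`-part) for the coefficient variables of a
power series: `(substSeries φ p) = Σ_k ε^k · φ(coeff_k p)`; at each `ε`-order this is a finite
sum. -/
def substSeries {R R' : Type} [CommRing R] [CommRing R'] (φ : R →+* PowerSeries R')
    (p : PowerSeries R) : PowerSeries R' :=
  PowerSeries.mk fun K => ∑ k ∈ Finset.range (K + 1),
    PowerSeries.coeff (R := R') (K - k) (φ (PowerSeries.coeff (R := R) k p))

/-- The renormalized amplitude `𝒜_i(ε,s,A) = P_{i,m_i}(ε,s,A)`, as an element of
`ℂ[t,s,A][[ε]]` (the `t`-variable of `P` renamed to `s`). -/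
def renAmpS {n : ℕ} (mvec : Fin n → ℤ) (Q : Fin n → EpsSeries (AmpRing n)) (i : Fin n) :
    PowerSeries (AmpRing2 n) :=
  PowerSeries.map renameTS (Pc Q i (mvec i))

/-- The substitution `t ↦ t - s`, `A_i ↦ 𝒜_i(ε,s,A)`, as a ring map
`ℂ[t,A] → ℂ[t,s,A][[ε]]`. -/
def substTA {n : ℕ} (mvec : Fin n → ℤ) (Q : Fin n → EpsSeries (AmpRing n)) :
    AmpRing n →+* PowerSeries (AmpRing2 n) :=
  MvPolynomial.eval₂Hom ((PowerSeries.C (R := AmpRing2 n)).comp MvPolynomial.C)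
    (fun v : Option (Fin n) => Option.elim v
      (PowerSeries.C (MvPolynomial.X none - MvPolynomial.X (some none)))
      (fun i => renAmpS mvec Q i))

/-- Coefficientwise `∂_t` on `ℂ[t,A][[ε]]`. -/
def dT {n : ℕ} (p : PowerSeries (AmpRing n)) : PowerSeries (AmpRing n) :=
  PowerSeries.mk fun k => MvPolynomial.pderiv none (PowerSeries.coeff (R := AmpRing n) k p)

/-- Evaluation of `W ∈ ℂ[ε, y₁, …, yₙ]` at `ε = ε` (the power series variable) and given
power series values of the `y`-variables, in `ℂ[t,A][[ε]]`. -/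
def WEval {n : ℕ} (W : MvPolynomial (Fin n) (Polynomial ℂ))
    (y : Fin n → PowerSeries (AmpRing n)) : PowerSeries (AmpRing n) :=
  MvPolynomial.eval₂
    (Polynomial.eval₂RingHom ((PowerSeries.C (R := AmpRing n)).comp (MvPolynomial.C : ℂ →+* AmpRing n))
      PowerSeries.X) y W

section AuxLemmas

open PowerSeries

variable {R : Type} [CommRing R]

/-- The subring of mode-`0`-supported elements of `ModeRing R`. -/
def modeZeroSub (R : Type) [CommRing R] : Subring (ModeRing R) :=
  (AddMonoidAlgebra.singleZeroRingHom : R →+* ModeRing R).range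

lemma singleZeroRingHom_apply' (a : R) :
    (AddMonoidAlgebra.singleZeroRingHom : R →+* ModeRing R) a
      = AddMonoidAlgebra.single (0 : ℤ) a := rfl

lemma single_zero_mem_modeZeroSub (a : R) :
    (AddMonoidAlgebra.single (0 : ℤ) a : ModeRing R) ∈ modeZeroSub R := ⟨a, rfl⟩

lemma apply_zero_of_mem_modeZeroSub {x : ModeRing R} (hx : x ∈ modeZeroSub R)
    {m : ℤ} (hm : m ≠ 0) : x.coeff m = 0 := by
  obtain ⟨a, rfl⟩ := hx
  rw [singleZeroRingHom_apply', AddMonoidAlgebra.coeff_single, Finsupp.single_apply, if_neg (fun h => hm h.symm)]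

lemma mem_modeZeroSub_of (x : ModeRing R) (h : ∀ m : ℤ, m ≠ 0 → x.coeff m = 0) :
    x ∈ modeZeroSub R := by
  refine ⟨x.coeff 0, ?_⟩
  rw [singleZeroRingHom_apply']
  refine AddMonoidAlgebra.ext (Finsupp.ext fun m => ?_)
  rw [AddMonoidAlgebra.coeff_single]
  rcases eq_or_ne m 0 with rfl | hm
  · exact Finsupp.single_eq_same
  · rw [Finsupp.single_apply, if_neg (fun h2 => hm h2.symm)]
    exact (h m hm).symm

/-- Series whose `ε`-coefficients up to order `N` are mode-`0` supported form a subring. -/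
def TN (R : Type) [CommRing R] (N : ℕ) : Subring (EpsSeries R) where
  carrier := {p | ∀ k ≤ N, PowerSeries.coeff (R := ModeRing R) k p ∈ modeZeroSub R}
  zero_mem' := fun k _ => by rw [map_zero]; exact zero_mem _
  one_mem' := fun k _ => by
    rw [PowerSeries.coeff_one]
    split
    · exact one_mem _
    · exact zero_mem _
  add_mem' := fun ha hb k hk => by rw [map_add]; exact add_mem (ha k hk) (hb k hk)
  neg_mem' := fun ha k hk => by rw [map_neg]; exact neg_mem (ha k hk)
  mul_mem' := fun {a b} ha hb k hk => by
    rw [PowerSeries.coeff_mul]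
    exact sum_mem fun p hp =>
      mul_mem (ha p.1 ((Finset.HasAntidiagonal.antidiagonal.fst_le hp).trans hk))
        (hb p.2 ((Finset.HasAntidiagonal.antidiagonal.snd_le hp).trans hk))

lemma mem_TN_iff {N : ℕ} {p : EpsSeries R} :
    p ∈ TN R N ↔ ∀ k ≤ N, PowerSeries.coeff (R := ModeRing R) k p ∈ modeZeroSub R := Iff.rfl

lemma X_mem_TN (N : ℕ) : (PowerSeries.X : EpsSeries R) ∈ TN R N := by
  rw [mem_TN_iff]
  intro k _
  rw [PowerSeries.coeff_X]
  split
  · exact one_mem _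
  · exact zero_mem _

lemma C_mem_TN (N : ℕ) {x : ModeRing R} (hx : x ∈ modeZeroSub R) :
    (PowerSeries.C (R := ModeRing R) x) ∈ TN R N := by
  rw [mem_TN_iff]
  intro k _
  rw [PowerSeries.coeff_C]
  split
  · exact hx
  · exact zero_mem _

lemma zEval_singleZero (R : Type) [CommRing R] [Algebra ℂ R] (c : ℂ) :
    zEval R (AddMonoidAlgebra.single (0 : ℤ) c)
      = PowerSeries.C (R := ModeRing R) (AddMonoidAlgebra.single 0 (algebraMap ℂ R c)) := by
  show AddMonoidAlgebra.liftNC _ _ (AddMonoidAlgebra.single (0 : ℤ) c) = _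
  rw [AddMonoidAlgebra.liftNC_single]
  simp

lemma polynomial_eval₂_mem {A B : Type*} [CommRing A] [CommRing B] (f : A →+* B)
    (s : Subring B) (hf : ∀ a, f a ∈ s) {x : B} (hx : x ∈ s) (p : Polynomial A) :
    Polynomial.eval₂ f x p ∈ s := by
  induction p using Polynomial.induction_on' with
  | add p q hp hq => rw [Polynomial.eval₂_add]; exact add_mem hp hq
  | monomial k a => rw [Polynomial.eval₂_monomial]; exact mul_mem (hf a) (pow_mem hx k)

lemma VEval_mem {n : ℕ} (R : Type) [CommRing R] [Algebra ℂ R] (N : ℕ)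
    (W : MvPolynomial (Fin n) (Polynomial ℂ)) (y : Fin n → EpsSeries R)
    (hy : ∀ i, y i ∈ TN R N) :
    VEval R (MvPolynomial.map (Polynomial.mapRingHom AddMonoidAlgebra.singleZeroRingHom) W) y
      ∈ TN R N := by
  unfold VEval
  rw [MvPolynomial.eval₂_map]
  refine MvPolynomial.eval₂_mem (fun i _ => ?_) hy
  rw [RingHom.comp_apply, Polynomial.coe_mapRingHom, Polynomial.coe_eval₂RingHom,
    Polynomial.eval₂_map]
  refine polynomial_eval₂_mem _ (TN R N) (fun a => ?_) (X_mem_TN N) _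
  rw [RingHom.comp_apply, singleZeroRingHom_apply', zEval_singleZero]
  exact C_mem_TN N (single_zero_mem_modeZeroSub _)

lemma optionEquivLeft_pderiv {σ : Type*} (P : MvPolynomial (Option σ) ℂ) :
    MvPolynomial.optionEquivLeft ℂ σ (MvPolynomial.pderiv none P)
      = Polynomial.derivative (MvPolynomial.optionEquivLeft ℂ σ P) := by
  induction P using MvPolynomial.induction_on with
  | C a => simp [MvPolynomial.optionEquivLeft_C]
  | add p q hp hq => rw [map_add, map_add, hp, hq, map_add, Polynomial.derivative_add]
  | mul_X p v hp =>
    cases v with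
    | none =>
      simp only [map_mul, map_add, MvPolynomial.pderiv_mul, MvPolynomial.pderiv_X_self,
        mul_one, hp, MvPolynomial.optionEquivLeft_X_none, Polynomial.derivative_mul,
        Polynomial.derivative_X]
    | some i =>
      simp only [map_mul, map_add, MvPolynomial.pderiv_mul,
        MvPolynomial.pderiv_X_of_ne (Option.some_ne_none i), mul_zero, add_zero, map_zero,
        hp, MvPolynomial.optionEquivLeft_X_some, Polynomial.derivative_mul,
        Polynomial.derivative_C]

lemma key_poly {σ : Type*} (c : ℂ) (hc : c ≠ 0) (P : MvPolynomial (Option σ) ℂ)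
    (h : MvPolynomial.pderiv none P + MvPolynomial.C c * P = 0) : P = 0 := by
  have h2 : Polynomial.derivative (MvPolynomial.optionEquivLeft ℂ σ P)
      + Polynomial.C (MvPolynomial.C c) * (MvPolynomial.optionEquivLeft ℂ σ) P = 0 := by
    have h3 := congrArg (MvPolynomial.optionEquivLeft ℂ σ) h
    rw [map_add, map_mul, optionEquivLeft_pderiv, MvPolynomial.optionEquivLeft_C,
      map_zero] at h3
    exact h3
  set q := (MvPolynomial.optionEquivLeft ℂ σ) P with hqdef
  have hC : (MvPolynomial.C c : MvPolynomial σ ℂ) ≠ 0 := by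
    simpa using hc
  have hq : q = 0 := by
    by_contra hne
    rcases eq_or_ne q.natDegree 0 with hd | hd
    · have hqC : q = Polynomial.C (q.coeff 0) := Polynomial.eq_C_of_natDegree_eq_zero hd
      rw [hqC, Polynomial.derivative_C, zero_add, ← Polynomial.C_mul] at h2
      have h4 : MvPolynomial.C c * q.coeff 0 = 0 := by
        rwa [Polynomial.C_eq_zero] at h2
      rcases mul_eq_zero.1 h4 with h5 | h5
      · exact hC h5
      · exact hne (by rw [hqC, h5, map_zero])
    · have h3 : Polynomial.derivative q = -(Polynomial.C (MvPolynomial.C c) * q) :=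
        eq_neg_of_add_eq_zero_left h2
      have hdd := Polynomial.natDegree_derivative_lt hd
      rw [h3, Polynomial.natDegree_neg, Polynomial.natDegree_C_mul hC] at hdd
      exact lt_irrefl _ hdd
  apply (MvPolynomial.optionEquivLeft ℂ σ).injective
  rw [map_zero, ← hqdef]
  exact hq

end AuxLemmas

/-- autonomous case with vanishing linear part: if `m₁ = ⋯ = mₙ = 0` and
each `V_j` is autonomous, i.e. `V_j = W_j ∈ ℂ[ε, y₁, …, yₙ]`, then `P_{j,m} = 0` for all
`m ≠ 0`, and the renormalized amplitudes `𝒜_j = P_{j,0}` satisfy the original system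
`∂_t P_{j,0}(ε,t,A) = ε W_j(ε, P_{1,0}, …, P_{n,0})` in `ℂ[t,A][[ε]]`. -/
theorem autonomous_zero_modes {n : ℕ} (hn : 0 < n) (mvec : Fin n → ℤ)
    (hm : ∀ j, mvec j = 0)
    (V : Fin n → MvPolynomial (Fin n) (Polynomial (AddMonoidAlgebra ℂ ℤ)))
    (W : Fin n → MvPolynomial (Fin n) (Polynomial ℂ))
    (hV : ∀ j, V j = MvPolynomial.map (Polynomial.mapRingHom AddMonoidAlgebra.singleZeroRingHom) (W j))
    (Q : Fin n → EpsSeries (AmpRing n))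
    (hQ : IsSecularFamily mvec V Q) :
    (∀ (j : Fin n) (m : ℤ), m ≠ 0 → Pc Q j m = 0)
    ∧ (∀ j : Fin n,
        dT (Pc Q j 0) = PowerSeries.X * WEval (W j) (fun i => Pc Q i 0)) := by
  classical
  have hmem : ∀ (k : ℕ) (j : Fin n),
      PowerSeries.coeff (R := ModeRing (AmpRing n)) k (Q j) ∈ modeZeroSub (AmpRing n) := by
    intro k
    induction k using Nat.strong_induction_on with
    | _ k IH =>
      intro j
      rcases k with _ | K
      · rw [hQ.coeff_zero j, hm j]
        exact single_zero_mem_modeZeroSub _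
      · refine mem_modeZeroSub_of _ (fun m hm0 => ?_)
        have hVmem : VEval (AmpRing n) (V j) Q ∈ TN (AmpRing n) K := by
          rw [hV j]
          refine VEval_mem _ _ _ _ (fun i => ?_)
          rw [mem_TN_iff]
          intro k' hk'
          exact IH k' (Nat.lt_succ_of_le hk') i
        have hode := congrArg (PowerSeries.coeff (R := AmpRing n) (K + 1)) (hQ.ode j m)
        simp only [map_add, PowerSeries.coeff_mk, PowerSeries.coeff_C_mul, Pc,
          PowerSeries.coeff_succ_X_mul] at hode
        rw [apply_zero_of_mem_modeZeroSub ((mem_TN_iff.1 hVmem) K le_rfl) hm0] at hode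
        have hc : Complex.I * ((m : ℂ) - ((mvec j : ℤ) : ℂ)) ≠ 0 := by
          rw [hm j]
          push_cast
          rw [sub_zero]
          exact mul_ne_zero Complex.I_ne_zero (by exact_mod_cast hm0)
        exact key_poly _ hc _ hode
  have hPc0 : ∀ (j : Fin n) (m : ℤ), m ≠ 0 → Pc Q j m = 0 := by
    intro j m hm0
    apply PowerSeries.ext
    intro k
    simp only [Pc, PowerSeries.coeff_mk, map_zero]
    exact apply_zero_of_mem_modeZeroSub (hmem k j) hm0
  have hQeq : ∀ j, Q j = PowerSeries.map
      (AddMonoidAlgebra.singleZeroRingHom : AmpRing n →+* ModeRing (AmpRing n))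
      (Pc Q j 0) := by
    intro j
    apply PowerSeries.ext
    intro k
    rw [PowerSeries.coeff_map]
    simp only [Pc, PowerSeries.coeff_mk]
    obtain ⟨a, ha⟩ := hmem k j
    rw [← ha, singleZeroRingHom_apply', AddMonoidAlgebra.coeff_single, Finsupp.single_eq_same]
    exact (singleZeroRingHom_apply' a).symm
  have hVE : ∀ j, VEval (AmpRing n) (V j) Q
      = PowerSeries.map
          (AddMonoidAlgebra.singleZeroRingHom : AmpRing n →+* ModeRing (AmpRing n))
          (WEval (W j) (fun i => Pc Q i 0)) := by
    intro j
    rw [hV j]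
    unfold VEval WEval
    rw [MvPolynomial.eval₂_comp_left
      (PowerSeries.map
        (AddMonoidAlgebra.singleZeroRingHom : AmpRing n →+* ModeRing (AmpRing n)))]
    rw [MvPolynomial.eval₂_map]
    congr 1
    · apply Polynomial.ringHom_ext
      · intro a
        simp only [RingHom.comp_apply, Polynomial.coe_mapRingHom, Polynomial.coe_eval₂RingHom,
          Polynomial.map_C, Polynomial.eval₂_C, singleZeroRingHom_apply', zEval_singleZero,
          PowerSeries.map_C, MvPolynomial.algebraMap_eq]
      · simp only [RingHom.comp_apply, Polynomial.coe_mapRingHom, Polynomial.coe_eval₂RingHom,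
          Polynomial.map_X, Polynomial.eval₂_X, PowerSeries.map_X]
    · funext i
      exact hQeq i
  refine ⟨hPc0, fun j => ?_⟩
  have hode := hQ.ode j 0
  have hz : Complex.I * (((0 : ℤ) : ℂ) - ((mvec j : ℤ) : ℂ)) = 0 := by
    rw [hm j]; simp
  rw [hz, map_zero, map_zero, zero_mul, add_zero] at hode
  have hL : dT (Pc Q j 0) = PowerSeries.mk
      (fun k => MvPolynomial.pderiv none
        ((PowerSeries.coeff (R := ModeRing (AmpRing n)) k (Q j)).coeff 0)) := by
    apply PowerSeries.ext
    intro k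
    simp only [dT, Pc, PowerSeries.coeff_mk]
  rw [hL, hode, hVE j]
  apply PowerSeries.ext
  intro k
  rw [PowerSeries.coeff_mk]
  rw [show (PowerSeries.X : EpsSeries (AmpRing n)) * PowerSeries.map
        (AddMonoidAlgebra.singleZeroRingHom : AmpRing n →+* ModeRing (AmpRing n))
        (WEval (W j) fun i => Pc Q i 0)
      = PowerSeries.map
        (AddMonoidAlgebra.singleZeroRingHom : AmpRing n →+* ModeRing (AmpRing n))
        (PowerSeries.X * WEval (W j) fun i => Pc Q i 0) by
    rw [map_mul, PowerSeries.map_X]]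
  rw [PowerSeries.coeff_map, singleZeroRingHom_apply', AddMonoidAlgebra.coeff_single, Finsupp.single_eq_same]

end
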